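/- (Purity concentration, achievability) For every density operator ρ on a d_A-dimensional Hilbert space and every ε, δ > 0, there exists n₀ such that for all n ≥ n₀ there is a decomposition H_A^{⊗n} ≅ H_{A_p} ⊗ H_{A_g} with dim H_{A_p} ≥ 2^{n(log d_A − H(ρ) − δ)}, a unitary U on H_A^{⊗n}, and a unit vector |0⟩ ∈ H_{A_p}, such that ‖Tr_{A_g}(U ρ^{⊗n} U†) − |0⟩⟨0|‖₁ ≤ ε. -/

import Mathlib

open Matrix Kronecker BigOperators ComplexOrder

/-- Trace norm `‖A‖₁ = Tr √(Aᴴ A)`. -/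
noncomputable def traceNorm {n : Type*} [Fintype n] [DecidableEq n]
    (A : Matrix n n ℂ) : ℝ :=
  (((Matrix.posSemidef_conjTranspose_mul_self A).1.eigenvectorUnitary.1 *
      Matrix.diagonal (((↑) : ℝ → ℂ) ∘ Real.sqrt ∘ (Matrix.posSemidef_conjTranspose_mul_self A).1.eigenvalues) *
      (star (Matrix.posSemidef_conjTranspose_mul_self A).1.eigenvectorUnitary : Matrix n n ℂ)).trace).re

/-- Von Neumann entropy (base 2), via eigenvalues; `0` for non-Hermitian input. -/
noncomputable def vnEntropy {n : Type*} [Fintype n] [DecidableEq n]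
    (ρ : Matrix n n ℂ) : ℝ :=
  if h : ρ.IsHermitian then
    -∑ i, (h.eigenvalues i) * Real.logb 2 (h.eigenvalues i)
  else 0

/-- A density operator: positive semidefinite with unit trace. -/
def IsDensity {n : Type*} [Fintype n] (ρ : Matrix n n ℂ) : Prop :=
  ρ.PosSemidef ∧ ρ.trace = 1

/-- Rank-one projector `|v⟩⟨v|`. -/
noncomputable def proj {n : Type*} (v : n → ℂ) : Matrix n n ℂ :=
  Matrix.vecMulVec v (star v)

/-- Partial trace over the second tensor factor. -/
noncomputable def ptraceSnd {a b : Type*} [Fintype b]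
    (ρ : Matrix (a × b) (a × b) ℂ) : Matrix a a ℂ :=
  Matrix.of fun i j => ∑ k, ρ (i, k) (j, k)

/-- Partial trace over the first tensor factor. -/
noncomputable def ptraceFst {a b : Type*} [Fintype a]
    (ρ : Matrix (a × b) (a × b) ℂ) : Matrix b b ℂ :=
  Matrix.of fun i j => ∑ k, ρ (k, i) (k, j)

/-- Quantum mutual information `I(A;B) = H(A) + H(B) − H(AB)`. -/
noncomputable def mutualInfo {a b : Type*} [Fintype a] [Fintype b]
    [DecidableEq a] [DecidableEq b] (ρ : Matrix (a × b) (a × b) ℂ) : ℝ :=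
  vnEntropy (ptraceSnd ρ) + vnEntropy (ptraceFst ρ) - vnEntropy ρ

/-- `n`-fold tensor power of a matrix. -/
noncomputable def tpow {d : ℕ} (ρ : Matrix (Fin d) (Fin d) ℂ) (n : ℕ) :
    Matrix (Fin n → Fin d) (Fin n → Fin d) ℂ :=
  Matrix.of fun f g => ∏ i, ρ (f i) (g i)

/-- The cq state obtained by measuring the `A` part of a bipartite state with POVM `Λ`:
`ρ^{XB} = Σ_x |x⟩⟨x| ⊗ Tr_A((Λ_x ⊗ I)ρ)`. -/
noncomputable def measureA {a b m : Type*} [Fintype a] [DecidableEq m]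
    (Λ : m → Matrix a a ℂ) (ρ : Matrix (a × b) (a × b) ℂ) :
    Matrix (m × b) (m × b) ℂ :=
  Matrix.of fun xi yj =>
    if xi.1 = yj.1 then ∑ k, ∑ l, (Λ xi.1) k l * ρ (l, xi.2) (k, yj.2) else 0

/-- Unitarity for (possibly rectangular between index types) matrices. -/
def IsUnitaryMat {p q : Type*} [Fintype p] [Fintype q] [DecidableEq p] [DecidableEq q]
    (U : Matrix p q ℂ) : Prop :=
  U * Uᴴ = 1 ∧ Uᴴ * U = 1


section Helpers


lemma tpow_apply {d : ℕ} (ρ : Matrix (Fin d) (Fin d) ℂ) (n : ℕ) (f g : Fin n → Fin d) :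
    tpow ρ n f g = ∏ i, ρ (f i) (g i) := rfl

lemma tpow_mul {d n : ℕ} (A B : Matrix (Fin d) (Fin d) ℂ) :
    tpow A n * tpow B n = tpow (A * B) n := by
  ext f g
  rw [Matrix.mul_apply]
  simp only [tpow_apply, Matrix.mul_apply]
  rw [Fintype.prod_sum fun i a => A (f i) a * B a (g i)]
  rw [Finset.sum_congr rfl]
  intro h _
  rw [Finset.prod_mul_distrib]

lemma tpow_one {d n : ℕ} : tpow (1 : Matrix (Fin d) (Fin d) ℂ) n = 1 := by
  ext f g
  simp only [tpow_apply, Matrix.one_apply]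
  rw [Fintype.prod_boole]
  simp [funext_iff]

lemma tpow_conjTranspose {d n : ℕ} (A : Matrix (Fin d) (Fin d) ℂ) :
    (tpow A n)ᴴ = tpow Aᴴ n := by
  ext f g
  simp only [Matrix.conjTranspose_apply, tpow_apply, star_prod]

lemma tpow_diagonal {d n : ℕ} (v : Fin d → ℂ) :
    tpow (Matrix.diagonal v) n = Matrix.diagonal (fun f : Fin n → Fin d => ∏ i, v (f i)) := by
  ext f g
  simp only [tpow_apply, Matrix.diagonal_apply]
  by_cases h : f = g
  · subst h
    simp
  · rw [if_neg h]
    obtain ⟨i, hi⟩ := Function.ne_iff.mp h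
    exact Finset.prod_eq_zero (Finset.mem_univ i) (if_neg hi)

/-- The 0/1 matrix of an equivalence of index types. -/
noncomputable def permMat {α β : Type*} [DecidableEq β] (E : α ≃ β) : Matrix α β ℂ :=
  Matrix.of fun a b => if E a = b then 1 else 0

lemma permMat_mul_mul_conjTranspose {α β : Type*} [Fintype α] [Fintype β]
    [DecidableEq α] [DecidableEq β] (E : α ≃ β) (N : Matrix β β ℂ) :
    permMat E * N * (permMat E)ᴴ = N.submatrix E E := by
  ext a b
  simp [Matrix.mul_apply, permMat, apply_ite (star : ℂ → ℂ), ite_mul, mul_ite,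
    Finset.sum_ite_eq, Finset.sum_ite_eq']

lemma permMat_unitary {α β : Type*} [Fintype α] [Fintype β]
    [DecidableEq α] [DecidableEq β] (E : α ≃ β) :
    permMat E * (permMat E)ᴴ = 1 ∧ (permMat E)ᴴ * permMat E = 1 := by
  constructor
  · ext a b
    simp [Matrix.mul_apply, permMat, apply_ite (star : ℂ → ℂ), ite_mul, mul_ite,
      Finset.sum_ite_eq, Finset.sum_ite_eq', Matrix.one_apply, E.injective.eq_iff]
  · ext a b
    simp [Matrix.mul_apply, permMat, apply_ite (star : ℂ → ℂ), ite_mul, mul_ite,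
      Finset.sum_ite_eq, Finset.sum_ite_eq', Matrix.one_apply, eq_comm,
      ← E.symm_apply_eq, E.symm.injective.eq_iff]


lemma traceNorm_diagonal_real {p : Type*} [Fintype p] [DecidableEq p] (w : p → ℝ) :
    traceNorm (Matrix.diagonal (fun i => (w i : ℂ))) = ∑ i, |w i| := by
  unfold traceNorm
  set A : Matrix p p ℂ := Matrix.diagonal (fun i => (w i : ℂ)) with hA
  have hB : Aᴴ * A = Matrix.diagonal (fun i => ((|w i| ^ 2 : ℝ) : ℂ)) := by
    rw [hA, Matrix.diagonal_conjTranspose, Matrix.diagonal_mul_diagonal]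
    congr 1
    funext i
    simp only [Pi.star_apply, Complex.star_def, Complex.conj_ofReal, sq_abs]
    push_cast
    ring
  set hH := (Matrix.posSemidef_conjTranspose_mul_self A).1 with hHdef
  have hU := hH.eigenvectorUnitary.2
  rw [Matrix.trace_mul_cycle, Matrix.mem_unitaryGroup_iff'.mp hU, Matrix.one_mul,
    Matrix.trace_diagonal, Complex.re_sum]
  simp only [Function.comp_apply, Complex.ofReal_re]
  have hcp : (Aᴴ * A).charpoly
      = ∏ i, (Polynomial.X - Polynomial.C ((hH.eigenvalues i : ℝ) : ℂ)) := hH.charpoly_eq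
  have h2 : (Aᴴ * A).charpoly
      = ∏ i, (Polynomial.X - Polynomial.C (((|w i| ^ 2 : ℝ)) : ℂ)) := by
    rw [hB, Matrix.charpoly_diagonal]
  have key : ∀ f : p → ℂ, ∏ i, (Polynomial.X - Polynomial.C (f i))
      = ((Finset.univ.val.map f).map (fun a => Polynomial.X - Polynomial.C a)).prod := by
    intro f
    rw [Multiset.map_map]
    rfl
  have e := hcp.symm.trans h2
  rw [key, key] at e
  have hm := congrArg Polynomial.roots e
  rw [Polynomial.roots_multiset_prod_X_sub_C, Polynomial.roots_multiset_prod_X_sub_C] at hm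
  have hm' := congrArg (Multiset.map Complex.re) hm
  rw [Multiset.map_map, Multiset.map_map] at hm'
  simp only [Function.comp_def, Complex.ofReal_re] at hm'
  calc ∑ i, Real.sqrt (hH.eigenvalues i)
      = ((Finset.univ.val.map hH.eigenvalues).map Real.sqrt).sum := by
        rw [Multiset.map_map, ← Finset.sum_eq_multiset_sum]
        rfl
    _ = ((Finset.univ.val.map (fun i => |w i| ^ 2)).map Real.sqrt).sum := by rw [hm']
    _ = ∑ i, |w i| := by
        rw [Multiset.map_map, ← Finset.sum_eq_multiset_sum]
        exact Finset.sum_congr rfl (fun i _ => by simp only [Function.comp_apply]; exact Real.sqrt_sq (abs_nonneg _))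

section prob
variable {d : ℕ} (lam gg : Fin d → ℝ)

lemma sum_q (hsum : ∑ a, lam a = 1) (n : ℕ) :
    ∑ x : Fin n → Fin d, ∏ i, lam (x i) = 1 := by
  rw [← Fintype.sum_pow, hsum, one_pow]

lemma sum_qf (hsum : ∑ a, lam a = 1) (n : ℕ) :
    ∑ x : Fin n → Fin d, (∏ i, lam (x i)) * (∑ i, gg (x i))
      = n * (∑ a, lam a * gg a) := by
  induction n with
  | zero => simp
  | succ n ih =>
    rw [← Equiv.sum_comp (Fin.consEquiv (fun _ : Fin (n+1) => Fin d))
      (fun x => (∏ i, lam (x i)) * (∑ i, gg (x i)))]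
    have key : ∀ y : Fin d × (Fin n → Fin d),
        (∏ i, lam ((Fin.consEquiv (fun _ : Fin (n+1) => Fin d)) y i)) *
          (∑ i, gg ((Fin.consEquiv (fun _ : Fin (n+1) => Fin d)) y i))
        = (lam y.1 * ∏ i, lam (y.2 i)) * (gg y.1 + ∑ i, gg (y.2 i)) := by
      rintro ⟨a, x⟩
      simp [Fin.consEquiv, Fin.prod_univ_succ, Fin.sum_univ_succ]
    rw [Finset.sum_congr rfl (fun y _ => key y), Fintype.sum_prod_type]
    have expand : ∀ a : Fin d, ∑ x : Fin n → Fin d,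
        (lam a * ∏ i, lam (x i)) * (gg a + ∑ i, gg (x i))
        = lam a * gg a * (∑ x : Fin n → Fin d, ∏ i, lam (x i))
          + lam a * (∑ x : Fin n → Fin d, (∏ i, lam (x i)) * (∑ i, gg (x i))) := by
      intro a
      rw [Finset.mul_sum, Finset.mul_sum, ← Finset.sum_add_distrib]
      exact Finset.sum_congr rfl (fun x _ => by ring)
    rw [Finset.sum_congr rfl (fun a _ => expand a), Finset.sum_add_distrib,
      sum_q lam hsum n, ih, ← Finset.sum_mul, ← Finset.sum_mul, hsum]
    push_cast
    ring

lemma sum_qf2 (hsum : ∑ a, lam a = 1) (n : ℕ) :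
    ∑ x : Fin n → Fin d, (∏ i, lam (x i)) * (∑ i, gg (x i))^2
      = n * (∑ a, lam a * (gg a)^2) + n * (n - 1) * (∑ a, lam a * gg a)^2 := by
  induction n with
  | zero => simp
  | succ n ih =>
    rw [← Equiv.sum_comp (Fin.consEquiv (fun _ : Fin (n+1) => Fin d))
      (fun x => (∏ i, lam (x i)) * (∑ i, gg (x i))^2)]
    have key : ∀ y : Fin d × (Fin n → Fin d),
        (∏ i, lam ((Fin.consEquiv (fun _ : Fin (n+1) => Fin d)) y i)) *
          (∑ i, gg ((Fin.consEquiv (fun _ : Fin (n+1) => Fin d)) y i))^2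
        = (lam y.1 * ∏ i, lam (y.2 i)) * (gg y.1 + ∑ i, gg (y.2 i))^2 := by
      rintro ⟨a, x⟩
      simp [Fin.consEquiv, Fin.prod_univ_succ, Fin.sum_univ_succ]
    rw [Finset.sum_congr rfl (fun y _ => key y), Fintype.sum_prod_type]
    have expand : ∀ a : Fin d, ∑ x : Fin n → Fin d,
        (lam a * ∏ i, lam (x i)) * (gg a + ∑ i, gg (x i))^2
        = lam a * (gg a)^2 * (∑ x : Fin n → Fin d, ∏ i, lam (x i))
          + 2 * (lam a * gg a) * (∑ x : Fin n → Fin d, (∏ i, lam (x i)) * (∑ i, gg (x i)))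
          + lam a * (∑ x : Fin n → Fin d, (∏ i, lam (x i)) * (∑ i, gg (x i))^2) := by
      intro a
      rw [Finset.mul_sum, Finset.mul_sum, Finset.mul_sum, ← Finset.sum_add_distrib,
        ← Finset.sum_add_distrib]
      exact Finset.sum_congr rfl (fun x _ => by ring)
    rw [Finset.sum_congr rfl (fun a _ => expand a), Finset.sum_add_distrib,
      Finset.sum_add_distrib, sum_q lam hsum n, sum_qf lam gg hsum n, ih,
      ← Finset.sum_mul, ← Finset.sum_mul, ← Finset.sum_mul, ← Finset.mul_sum, hsum]
    push_cast
    ring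

lemma sum_q_dev_sq (hsum : ∑ a, lam a = 1) (n : ℕ) :
    ∑ x : Fin n → Fin d, (∏ i, lam (x i)) * ((∑ i, gg (x i)) - n * (∑ a, lam a * gg a))^2
      = n * ((∑ a, lam a * (gg a)^2) - (∑ a, lam a * gg a)^2) := by
  set H := ∑ a, lam a * gg a
  have expand : ∀ x : Fin n → Fin d,
      (∏ i, lam (x i)) * ((∑ i, gg (x i)) - n * H)^2
      = (∏ i, lam (x i)) * (∑ i, gg (x i))^2
        - (2 * (n:ℝ) * H) * ((∏ i, lam (x i)) * (∑ i, gg (x i)))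
        + ((n:ℝ) * H)^2 * (∏ i, lam (x i)) := by
    intro x; ring
  rw [Finset.sum_congr rfl (fun x _ => expand x)]
  rw [Finset.sum_add_distrib, Finset.sum_sub_distrib, ← Finset.mul_sum, ← Finset.mul_sum,
    sum_q lam hsum n, sum_qf lam gg hsum n, sum_qf2 lam gg hsum n]
  ring

end prob

section typ
variable {d : ℕ} (lam gg : Fin d → ℝ)

/-- The typical set. -/
noncomputable def typSet (n : ℕ) (δ' H : ℝ) : Finset (Fin n → Fin d) :=
  Finset.univ.filter (fun x => (∀ i, lam (x i) ≠ 0) ∧ ∑ i, gg (x i) ≤ n * (H + δ'))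

lemma prob_typ (hnn : ∀ a, 0 ≤ lam a) (hsum : ∑ a, lam a = 1)
    {δ' : ℝ} (hδ' : 0 < δ') {n : ℕ} (hn : 1 ≤ n) :
    1 - ((∑ a, lam a * (gg a)^2) - (∑ a, lam a * gg a)^2) / (n * δ'^2)
      ≤ ∑ x ∈ typSet lam gg n δ' (∑ a, lam a * gg a), ∏ i, lam (x i) := by
  classical
  set H := ∑ a, lam a * gg a with hH
  set V := (∑ a, lam a * (gg a)^2) - H^2 with hV
  have hq : ∀ x : Fin n → Fin d, 0 ≤ ∏ i, lam (x i) :=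
    fun x => Finset.prod_nonneg (fun i _ => hnn (x i))
  set P : (Fin n → Fin d) → Prop :=
    fun x => (∀ i, lam (x i) ≠ 0) ∧ ∑ i, gg (x i) ≤ n * (H + δ') with hP
  have hsplit : (∑ x ∈ Finset.univ.filter P, ∏ i, lam (x i))
      + ∑ x ∈ Finset.univ.filter (fun x => ¬ P x), ∏ i, lam (x i) = 1 := by
    rw [Finset.sum_filter_add_sum_filter_not]
    exact sum_q lam hsum n
  have hnpos : (0:ℝ) < n := by exact_mod_cast hn
  have hdenom : (0:ℝ) < ((n:ℝ) * δ')^2 := by positivity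
  have hbad : ∑ x ∈ Finset.univ.filter (fun x => ¬ P x), ∏ i, lam (x i)
      ≤ V / (n * δ'^2) := by
    have step1 : ∀ x ∈ Finset.univ.filter (fun x => ¬ P x),
        (∏ i, lam (x i)) ≤ (∏ i, lam (x i)) * ((∑ i, gg (x i)) - n * H)^2 / ((n:ℝ) * δ')^2 := by
      intro x hx
      rw [Finset.mem_filter] at hx
      by_cases hA : ∀ i, lam (x i) ≠ 0
      · have hB : ¬ (∑ i, gg (x i) ≤ n * (H + δ')) := fun h => hx.2 ⟨hA, h⟩
        push_neg at hB
        have hdev : (n:ℝ) * δ' < (∑ i, gg (x i)) - n * H := by nlinarith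
        have hnd : (0:ℝ) < (n:ℝ) * δ' := by positivity
        have hdev2 : ((n:ℝ) * δ')^2 ≤ ((∑ i, gg (x i)) - n * H)^2 :=
          pow_le_pow_left₀ hnd.le hdev.le 2
        rw [le_div_iff₀ hdenom]
        calc (∏ i, lam (x i)) * ((n:ℝ) * δ')^2
            ≤ (∏ i, lam (x i)) * ((∑ i, gg (x i)) - n * H)^2 :=
              mul_le_mul_of_nonneg_left hdev2 (hq x)
          _ = _ := rfl
      · push_neg at hA
        obtain ⟨i, hi⟩ := hA
        have : ∏ j, lam (x j) = 0 := Finset.prod_eq_zero (Finset.mem_univ i) hi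
        rw [this]
        positivity
    calc ∑ x ∈ Finset.univ.filter (fun x => ¬ P x), ∏ i, lam (x i)
        ≤ ∑ x ∈ Finset.univ.filter (fun x => ¬ P x),
            (∏ i, lam (x i)) * ((∑ i, gg (x i)) - n * H)^2 / ((n:ℝ) * δ')^2 :=
          Finset.sum_le_sum step1
      _ ≤ ∑ x : Fin n → Fin d,
            (∏ i, lam (x i)) * ((∑ i, gg (x i)) - n * H)^2 / ((n:ℝ) * δ')^2 := by
          apply Finset.sum_le_sum_of_subset_of_nonneg (Finset.subset_univ _)
          intro x _ _
          exact div_nonneg (mul_nonneg (hq x) (sq_nonneg _)) (sq_nonneg _)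
      _ = (∑ x : Fin n → Fin d, (∏ i, lam (x i)) * ((∑ i, gg (x i)) - n * H)^2)
            / ((n:ℝ) * δ')^2 := by rw [Finset.sum_div]
      _ = (n * V) / ((n:ℝ) * δ')^2 := by rw [sum_q_dev_sq lam gg hsum n]
      _ = V / (n * δ'^2) := by field_simp
  have : typSet lam gg n δ' H = Finset.univ.filter P := rfl
  rw [this]
  linarith
end typ

lemma card_typ {d : ℕ} (lam : Fin d → ℝ) (hnn : ∀ a, 0 ≤ lam a) (hsum : ∑ a, lam a = 1)
    {δ' H : ℝ} (n : ℕ) :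
    ((typSet lam (fun a => -Real.logb 2 (lam a)) n δ' H).card : ℝ)
      ≤ 2 ^ ((n:ℝ) * (H + δ')) := by
  classical
  set gg : Fin d → ℝ := fun a => -Real.logb 2 (lam a) with hgg
  set T := typSet lam gg n δ' H with hT
  have hmem : ∀ x ∈ T, (2:ℝ) ^ (-((n:ℝ) * (H + δ'))) ≤ ∏ i, lam (x i) := by
    intro x hx
    rw [hT, typSet, Finset.mem_filter] at hx
    obtain ⟨-, hA, hB⟩ := hx
    have hval : ∀ i, lam (x i) = (2:ℝ) ^ (-(gg (x i))) := by
      intro i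
      rw [hgg]
      simp only [neg_neg]
      rw [Real.rpow_logb (by norm_num) (by norm_num)
        (lt_of_le_of_ne (hnn (x i)) (Ne.symm (hA i)))]
    calc (2:ℝ) ^ (-((n:ℝ) * (H + δ'))) ≤ (2:ℝ) ^ (-(∑ i, gg (x i))) := by
          apply Real.rpow_le_rpow_left_iff (by norm_num : (1:ℝ) < 2) |>.mpr
          linarith
      _ = ∏ i, (2:ℝ) ^ (-(gg (x i))) := by
          rw [← Real.rpow_sum_of_pos (by norm_num : (0:ℝ) < 2)]
          rw [← Finset.sum_neg_distrib]
      _ = ∏ i, lam (x i) := Finset.prod_congr rfl (fun i _ => (hval i).symm)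
  have hcard : (T.card : ℝ) * (2:ℝ) ^ (-((n:ℝ) * (H + δ'))) ≤ 1 := by
    calc (T.card : ℝ) * (2:ℝ) ^ (-((n:ℝ) * (H + δ')))
        ≤ ∑ x ∈ T, ∏ i, lam (x i) := by
          have := Finset.sum_le_sum hmem
          rwa [Finset.sum_const, nsmul_eq_mul] at this
      _ ≤ ∑ x : Fin n → Fin d, ∏ i, lam (x i) :=
          Finset.sum_le_sum_of_subset_of_nonneg (Finset.subset_univ _)
            (fun x _ _ => Finset.prod_nonneg (fun i _ => hnn (x i)))
      _ = 1 := sum_q lam hsum n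
  have hpos : (0:ℝ) < (2:ℝ) ^ (-((n:ℝ) * (H + δ'))) := Real.rpow_pos_of_pos (by norm_num) _
  have := mul_le_mul_of_nonneg_right hcard
    (le_of_lt (Real.rpow_pos_of_pos (by norm_num : (0:ℝ) < 2) ((n:ℝ) * (H + δ'))))
  rw [one_mul, mul_assoc, ← Real.rpow_add (by norm_num : (0:ℝ) < 2)] at this
  simpa using this

lemma finProd_symm_fst {p g : ℕ} (v : Fin (p * g)) (hv : (v : ℕ) < g) :
    ((finProdFinEquiv.symm v).1 : ℕ) = 0 := by
  set w := finProdFinEquiv.symm v with hw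
  have h1 : finProdFinEquiv w = v := Equiv.apply_symm_apply _ _
  have h2 : (v : ℕ) = (w.2 : ℕ) + g * (w.1 : ℕ) := by
    rw [← h1]; rfl
  have h3 := w.2.isLt
  by_cases h : (w.1 : ℕ) = 0
  · exact h
  · have h5 : 1 ≤ (w.1 : ℕ) := Nat.pos_of_ne_zero h
    have h6 : g ≤ g * (w.1 : ℕ) := Nat.le_mul_of_pos_right g h5
    omega

lemma exists_good_equiv {α : Type*} [Fintype α] [DecidableEq α] (S : Finset α)
    {p g : ℕ} (hcard : Fintype.card α = p * g) (hS : S.card ≤ g) :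
    ∃ E : (Fin p × Fin g) ≃ α, ∀ x ∈ S, ((E.symm x).1 : ℕ) = 0 := by
  classical
  have ht : S.card ≤ Fintype.card α := Finset.card_le_univ S
  let e1 : {x // x ∈ S} ≃ Fin S.card := S.equivFin
  let e2' : {x // ¬ x ∈ S} ≃ ↥(Sᶜ) := Equiv.subtypeEquivRight (fun x => (Finset.mem_compl).symm)
  let e2 : ↥(Sᶜ) ≃ Fin (Fintype.card α - S.card) := by
    apply Fintype.equivFinOfCardEq
    rw [Fintype.card_coe, Finset.card_compl]
  have hNe : S.card + (Fintype.card α - S.card) = p * g := by omega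
  let F : α ≃ Fin p × Fin g :=
    (Equiv.sumCompl (· ∈ S)).symm.trans
      ((Equiv.sumCongr e1 (e2'.trans e2)).trans
        ((finSumFinEquiv).trans
          ((finCongr hNe).trans finProdFinEquiv.symm)))
  refine ⟨F.symm, fun x hx => ?_⟩
  rw [Equiv.symm_symm]
  have h0 : (Equiv.sumCompl (· ∈ S)).symm x = Sum.inl ⟨x, hx⟩ :=
    Equiv.sumCompl_symm_apply_of_pos (p := (· ∈ S)) hx
  have hF : F x = finProdFinEquiv.symm
      ((finCongr hNe) (finSumFinEquiv (Sum.inl (e1 ⟨x, hx⟩)))) := by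
    simp only [F, Equiv.trans_apply, h0, Equiv.sumCongr_apply, Sum.map_inl]
  rw [hF]
  apply finProd_symm_fst
  rw [finCongr_apply, Fin.coe_cast, finSumFinEquiv_apply_left, Fin.coe_castAdd]
  exact lt_of_lt_of_le (e1 ⟨x, hx⟩).isLt hS


lemma ptraceSnd_diagonal {a b : Type*} [Fintype a] [Fintype b] [DecidableEq a] [DecidableEq b]
    (c : a × b → ℂ) :
    ptraceSnd (Matrix.diagonal c) = Matrix.diagonal (fun i => ∑ k, c (i, k)) := by
  ext i j
  simp only [ptraceSnd, Matrix.of_apply, Matrix.diagonal_apply]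
  rcases eq_or_ne i j with h | h
  · subst h
    simp
  · rw [if_neg h]
    apply Finset.sum_eq_zero
    intro k _
    rw [if_neg (by simp [h])]


end Helpers

theorem purity_concentration_achievability {dA : ℕ}
    (ρ : Matrix (Fin dA) (Fin dA) ℂ) (hρ : IsDensity ρ)
    (ε δ : ℝ) (hε : 0 < ε) (hδ : 0 < δ) :
    ∃ n₀ : ℕ, ∀ n ≥ n₀, ∃ (p g : ℕ)
      (U : Matrix (Fin p × Fin g) (Fin n → Fin dA) ℂ), IsUnitaryMat U ∧
      ∃ v : Fin p → ℂ, star v ⬝ᵥ v = 1 ∧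
        (2 : ℝ) ^ ((n : ℝ) * (Real.logb 2 dA - vnEntropy ρ - δ)) ≤ (p : ℝ) ∧
        traceNorm (ptraceSnd (U * tpow ρ n * Uᴴ) - proj v) ≤ ε := by
  classical
  have hherm : ρ.IsHermitian := hρ.1.1
  set lam : Fin dA → ℝ := hherm.eigenvalues with hlam
  have hnn : ∀ a, 0 ≤ lam a := fun a => hρ.1.eigenvalues_nonneg a
  set W : Matrix (Fin dA) (Fin dA) ℂ :=
    (hherm.eigenvectorUnitary : Matrix (Fin dA) (Fin dA) ℂ) with hWdef
  have hWW : W * Wᴴ = 1 := by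
    have := (Matrix.mem_unitaryGroup_iff).mp hherm.eigenvectorUnitary.2
    simpa [Matrix.star_eq_conjTranspose] using this
  have hWsW : Wᴴ * W = 1 := by
    have := (Matrix.mem_unitaryGroup_iff').mp hherm.eigenvectorUnitary.2
    simpa [Matrix.star_eq_conjTranspose] using this
  have hspec : ρ = W * Matrix.diagonal (fun a => (lam a : ℂ)) * Wᴴ := by
    have := hherm.spectral_theorem
    simpa [Matrix.star_eq_conjTranspose, Function.comp_def] using this
  have hdA1 : 1 ≤ dA := by
    by_contra h
    push_neg at h
    interval_cases dA
    · have h2 := hρ.2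
      have h0 : ρ.trace = 0 := by simp [Matrix.trace]
      rw [h0] at h2
      exact one_ne_zero h2.symm
  have htr : ∑ a, lam a = 1 := by
    have h1 : ρ.trace = ∑ a, (lam a : ℂ) := by
      rw [hspec, Matrix.trace_mul_cycle, hWsW, Matrix.one_mul, Matrix.trace_diagonal]
    rw [hρ.2] at h1
    have h2 : ((∑ a, lam a : ℝ) : ℂ) = 1 := by push_cast; rw [← h1]
    exact_mod_cast h2
  have hle1 : ∀ a, lam a ≤ 1 := by
    intro a
    rw [← htr]
    exact Finset.single_le_sum (fun b _ => hnn b) (Finset.mem_univ a)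
  set gg : Fin dA → ℝ := fun a => -Real.logb 2 (lam a) with hgg
  set H : ℝ := ∑ a, lam a * gg a with hHdef
  have hHent : vnEntropy ρ = H := by
    rw [vnEntropy, dif_pos hherm, hHdef]
    rw [← Finset.sum_neg_distrib]
    congr 1
    funext a
    simp [hgg]
    rfl
  have hH0 : 0 ≤ H := Finset.sum_nonneg fun a _ => mul_nonneg (hnn a)
    (neg_nonneg.mpr (Real.logb_nonpos one_lt_two (hnn a) (hle1 a)))
  set V : ℝ := (∑ a, lam a * (gg a)^2) - H^2 with hVdef
  set δ2 : ℝ := δ/2 with hδ2def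
  have hδ2 : 0 < δ2 := by positivity
  -- choose n₀
  obtain ⟨n₁, hn₁⟩ : ∃ n₁ : ℕ, 1 ≤ n₁ ∧ ∀ n : ℕ, n₁ ≤ n → V / (n * δ2^2) ≤ ε/2 := by
    refine ⟨⌈V / ((ε/2) * δ2^2)⌉₊ + 1, le_add_self, fun n h => ?_⟩
    have hC : (0:ℝ) < (ε/2) * δ2^2 := by positivity
    have h1 : V / ((ε/2) * δ2^2) ≤ (n:ℝ) := by
      calc V / ((ε/2) * δ2^2) ≤ (⌈V / ((ε/2) * δ2^2)⌉₊ : ℝ) := Nat.le_ceil _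
        _ ≤ (n:ℝ) := by exact_mod_cast le_trans (Nat.le_succ _) h
    have hn1 : (1:ℝ) ≤ (n:ℝ) := by exact_mod_cast le_trans (Nat.le_add_left 1 _) h
    have hV' : V ≤ (n:ℝ) * ((ε/2) * δ2^2) := by
      rw [div_le_iff₀ hC] at h1
      linarith
    rw [div_le_iff₀ (by positivity)]
    nlinarith
  obtain ⟨n₂, hn₂⟩ : ∃ n₂ : ℕ, ∀ n : ℕ, n₂ ≤ n → (dA:ℝ) ≤ 2 ^ ((n:ℝ) * δ2) := by
    refine ⟨⌈Real.logb 2 dA / δ2⌉₊, fun n h => ?_⟩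
    have h1 : Real.logb 2 dA / δ2 ≤ (n:ℝ) := by
      calc Real.logb 2 dA / δ2 ≤ (⌈Real.logb 2 dA / δ2⌉₊ : ℝ) := Nat.le_ceil _
        _ ≤ (n:ℝ) := by exact_mod_cast h
    have h2 : Real.logb 2 dA ≤ (n:ℝ) * δ2 := by
      rw [div_le_iff₀ hδ2] at h1
      linarith
    have hdA0 : (0:ℝ) < dA := by exact_mod_cast hdA1
    calc (dA:ℝ) = 2 ^ (Real.logb 2 dA) := (Real.rpow_logb two_pos (by norm_num) hdA0).symm
      _ ≤ 2 ^ ((n:ℝ) * δ2) :=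
        (Real.rpow_le_rpow_left_iff one_lt_two).mpr h2
  refine ⟨max n₁ n₂, fun n hn => ?_⟩
  have hnn₁ : n₁ ≤ n := le_trans (le_max_left _ _) hn
  have hnn₂ : n₂ ≤ n := le_trans (le_max_right _ _) hn
  have hn1 : 1 ≤ n := le_trans hn₁.1 hnn₁
  -- typical set
  set T : Finset (Fin n → Fin dA) := typSet lam gg n δ2 H with hTdef
  have hTn : T.card ≤ dA ^ n := by
    calc T.card ≤ Fintype.card (Fin n → Fin dA) := Finset.card_le_univ T
      _ = dA ^ n := by rw [Fintype.card_fun]; simp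
  have hex : ∃ k, T.card ≤ dA ^ k := ⟨n, hTn⟩
  set k := Nat.find hex with hkdef
  have hkspec : T.card ≤ dA ^ k := Nat.find_spec hex
  have hkn : k ≤ n := Nat.find_le hTn
  refine ⟨dA^(n-k), dA^k, ?_⟩
  have hcard : Fintype.card (Fin n → Fin dA) = dA^(n-k) * dA^k := by
    rw [Fintype.card_fun]
    simp only [Fintype.card_fin]
    rw [← pow_add, Nat.sub_add_cancel hkn]
  obtain ⟨E, hE⟩ := exists_good_equiv T hcard hkspec
  set U : Matrix (Fin (dA^(n-k)) × Fin (dA^k)) (Fin n → Fin dA) ℂ :=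
    permMat E * (tpow W n)ᴴ with hUdef
  have key1 : (tpow W n)ᴴ * tpow W n = 1 := by
    rw [tpow_conjTranspose, tpow_mul, hWsW, tpow_one]
  have key2 : tpow W n * (tpow W n)ᴴ = 1 := by
    rw [tpow_conjTranspose, tpow_mul, hWW, tpow_one]
  have hUconj : Uᴴ = tpow W n * (permMat E)ᴴ := by
    rw [hUdef, Matrix.conjTranspose_mul, Matrix.conjTranspose_conjTranspose]
  refine ⟨U, ⟨?_, ?_⟩, ?_⟩
  · rw [hUconj, hUdef, Matrix.mul_assoc, ← Matrix.mul_assoc ((tpow W n)ᴴ), key1,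
      Matrix.one_mul, (permMat_unitary E).1]
  · rw [hUconj, hUdef, Matrix.mul_assoc, ← Matrix.mul_assoc ((permMat E)ᴴ),
      (permMat_unitary E).2, Matrix.one_mul, key2]
  -- the state is diagonal
  set q : (Fin n → Fin dA) → ℝ := fun x => ∏ i, lam (x i) with hqdef
  have hq0 : ∀ x, 0 ≤ q x := fun x => Finset.prod_nonneg (fun i _ => hnn (x i))
  have htpowρ : tpow ρ n = tpow W n * tpow (Matrix.diagonal (fun a => (lam a : ℂ))) n
      * (tpow W n)ᴴ := by
    conv_lhs => rw [hspec]
    rw [← tpow_mul, ← tpow_mul, tpow_conjTranspose]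
  have hdiag : U * tpow ρ n * Uᴴ
      = Matrix.diagonal (fun y : Fin (dA^(n-k)) × Fin (dA^k) => ((q (E y) : ℝ) : ℂ)) := by
    rw [hUconj, hUdef, htpowρ]
    have hassoc : permMat E * (tpow W n)ᴴ
        * (tpow W n * tpow (Matrix.diagonal (fun a => (lam a : ℂ))) n * (tpow W n)ᴴ)
        * (tpow W n * (permMat E)ᴴ)
        = permMat E * ((tpow W n)ᴴ * tpow W n)
          * tpow (Matrix.diagonal (fun a => (lam a : ℂ))) n
          * ((tpow W n)ᴴ * tpow W n) * (permMat E)ᴴ := by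
      simp only [Matrix.mul_assoc]
    rw [hassoc, key1, Matrix.mul_one, Matrix.mul_one,
      permMat_mul_mul_conjTranspose, tpow_diagonal, Matrix.submatrix_diagonal_equiv]
    congr 1
    funext y
    simp only [Function.comp_apply, hqdef]
    push_cast
    rfl
  have hpt : ptraceSnd (U * tpow ρ n * Uᴴ)
      = Matrix.diagonal (fun i : Fin (dA^(n-k)) => ((∑ kk, q (E (i, kk)) : ℝ) : ℂ)) := by
    rw [hdiag, ptraceSnd_diagonal]
    congr 1
    funext i
    push_cast
    rfl
  set s : Fin (dA^(n-k)) → ℝ := fun i => ∑ kk, q (E (i, kk)) with hsdef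
  have hs_nonneg : ∀ i, 0 ≤ s i := fun i => Finset.sum_nonneg (fun kk _ => hq0 _)
  have hs_sum : ∑ i, s i = 1 := by
    have h1 : ∑ y : Fin (dA^(n-k)) × Fin (dA^k), q (E y) = 1 := by
      rw [Equiv.sum_comp E q]
      exact sum_q lam htr n
    rw [Fintype.sum_prod_type] at h1
    exact h1
  have hp0 : 0 < dA^(n-k) := pow_pos hdA1 _
  set i0 : Fin (dA^(n-k)) := ⟨0, hp0⟩ with hi0def
  set v : Fin (dA^(n-k)) → ℂ := fun i => if i = i0 then 1 else 0 with hvdef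
  have hTsum : 1 - ε/2 ≤ ∑ x ∈ T, q x := by
    have h1 := prob_typ lam gg hnn htr hδ2 hn1
    have h2 : V / (n * δ2^2) ≤ ε/2 := hn₁.2 n hnn₁
    rw [← hHdef] at h1
    calc 1 - ε/2 ≤ 1 - V / (n * δ2^2) := by linarith
      _ ≤ ∑ x ∈ T, q x := h1
  have hs0 : 1 - ε/2 ≤ s i0 := by
    have himg : T.image E.symm ⊆ {i0} ×ˢ (Finset.univ : Finset (Fin (dA^k))) := by
      intro y hy
      rw [Finset.mem_image] at hy
      obtain ⟨x, hx, rfl⟩ := hy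
      rw [Finset.mem_product]
      refine ⟨Finset.mem_singleton.mpr ?_, Finset.mem_univ _⟩
      exact Fin.ext (hE x hx)
    calc 1 - ε/2 ≤ ∑ x ∈ T, q x := hTsum
      _ = ∑ y ∈ T.image E.symm, q (E y) := by
          rw [Finset.sum_image (fun a _ b _ h => E.symm.injective h)]
          exact Finset.sum_congr rfl (fun x _ => by rw [Equiv.apply_symm_apply])
      _ ≤ ∑ y ∈ {i0} ×ˢ (Finset.univ : Finset (Fin (dA^k))), q (E y) :=
          Finset.sum_le_sum_of_subset_of_nonneg himg (fun y _ _ => hq0 _)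
      _ = s i0 := by rw [Finset.sum_product, Finset.sum_singleton]
  have hs0le : s i0 ≤ 1 := by
    rw [← hs_sum]
    exact Finset.single_le_sum (fun i _ => hs_nonneg i) (Finset.mem_univ i0)
  refine ⟨v, ?_, ?_, ?_⟩
  · -- unit vector
    simp only [dotProduct, hvdef, Pi.star_apply, apply_ite (star : ℂ → ℂ),
      star_one, star_zero, ite_mul, one_mul, zero_mul, Finset.sum_ite_eq']
    simp
  · -- dimension bound
    have hdA0 : (0:ℝ) < dA := by exact_mod_cast hdA1
    have hgk : ((dA:ℝ))^k ≤ 2 ^ ((n:ℝ) * (H + δ)) := by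
      rcases Nat.eq_zero_or_pos k with hk0 | hkpos
      · rw [hk0, pow_zero]
        have : (0:ℝ) ≤ (n:ℝ) * (H + δ) := by positivity
        calc (1:ℝ) = 2 ^ (0:ℝ) := by rw [Real.rpow_zero]
          _ ≤ 2 ^ ((n:ℝ) * (H + δ)) := (Real.rpow_le_rpow_left_iff one_lt_two).mpr this
      · have hmin : ¬ (T.card ≤ dA ^ (k-1)) := Nat.find_min hex (by omega)
        push_neg at hmin
        have hstep : (dA:ℝ)^k ≤ (dA:ℝ) * T.card := by
          have : dA^k ≤ dA * T.card := by
            calc dA^k = dA * dA^(k-1) := by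
                  rw [← pow_succ']
                  congr 1
                  omega
              _ ≤ dA * T.card := Nat.mul_le_mul_left dA (le_of_lt hmin)
          exact_mod_cast this
        have hcardT : (T.card : ℝ) ≤ 2 ^ ((n:ℝ) * (H + δ2)) := card_typ lam hnn htr n
        calc ((dA:ℝ))^k ≤ (dA:ℝ) * T.card := hstep
          _ ≤ 2 ^ ((n:ℝ) * δ2) * 2 ^ ((n:ℝ) * (H + δ2)) := by
              apply mul_le_mul (hn₂ n hnn₂) hcardT (Nat.cast_nonneg _)
              positivity
          _ = 2 ^ ((n:ℝ) * (H + δ)) := by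
              rw [← Real.rpow_add two_pos]
              congr 1
              rw [hδ2def]
              ring
    -- now conclude
    have hpow2 : (2:ℝ) ^ ((n:ℝ) * Real.logb 2 dA) = (dA:ℝ)^n := by
      rw [mul_comm, Real.rpow_mul (by norm_num : (0:ℝ) ≤ 2), Real.rpow_logb two_pos
        (by norm_num) hdA0, Real.rpow_natCast]
    have hsplit : ((dA:ℝ))^(n-k) * ((dA:ℝ))^k = (dA:ℝ)^n := by
      rw [← pow_add, Nat.sub_add_cancel hkn]
    have hppos : (0:ℝ) ≤ ((dA:ℝ))^(n-k) := by positivity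
    rw [hHent]
    push_cast
    calc (2:ℝ) ^ ((n:ℝ) * (Real.logb 2 dA - H - δ))
        = 2 ^ ((n:ℝ) * Real.logb 2 dA) * 2 ^ (-((n:ℝ) * (H + δ))) := by
          rw [← Real.rpow_add two_pos]
          congr 1
          ring
      _ = ((dA:ℝ)^(n-k) * (dA:ℝ)^k) * 2 ^ (-((n:ℝ) * (H + δ))) := by
          rw [hpow2, hsplit]
      _ ≤ ((dA:ℝ)^(n-k) * 2 ^ ((n:ℝ) * (H + δ))) * 2 ^ (-((n:ℝ) * (H + δ))) := by
          apply mul_le_mul_of_nonneg_right _ (le_of_lt (Real.rpow_pos_of_pos two_pos _))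
          exact mul_le_mul_of_nonneg_left hgk hppos
      _ = (dA:ℝ)^(n-k) := by
          rw [mul_assoc, ← Real.rpow_add two_pos]
          simp
  · -- trace norm bound
    have hproj : proj v = Matrix.diagonal (fun i => if i = i0 then (1:ℂ) else 0) := by
      ext i j
      by_cases hij : i = j
      · subst hij
        by_cases hi : i = i0 <;>
          simp [proj, Matrix.vecMulVec_apply, hvdef, hi]
      · rw [Matrix.diagonal_apply_ne _ hij]
        by_cases hi : i = i0 <;> by_cases hj : j = i0
        · exact absurd (hi.trans hj.symm) hij
        · simp [proj, Matrix.vecMulVec_apply, hvdef, hi, hj]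
        · simp [proj, Matrix.vecMulVec_apply, hvdef, hi, hj]
        · simp [proj, Matrix.vecMulVec_apply, hvdef, hi, hj]
    have hdiff : ptraceSnd (U * tpow ρ n * Uᴴ) - proj v
        = Matrix.diagonal (fun i => (((s i - if i = i0 then 1 else 0 : ℝ)) : ℂ)) := by
      rw [hpt, hproj, Matrix.diagonal_sub]
      apply congrArg Matrix.diagonal
      funext i
      simp only [Pi.sub_apply, hsdef, Complex.ofReal_sub, apply_ite (Complex.ofReal)]
      push_cast
      ring
    rw [hdiff, traceNorm_diagonal_real]
    set w : Fin (dA^(n-k)) → ℝ := fun i => s i - if i = i0 then 1 else 0 with hwdef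
    rw [← Finset.add_sum_erase _ _ (Finset.mem_univ i0)]
    have hw0 : w i0 = s i0 - 1 := by simp [hwdef]
    have h1 : |w i0| = 1 - s i0 := by
      rw [hw0, abs_of_nonpos (by linarith)]
      ring
    have h2 : ∀ i ∈ Finset.univ.erase i0, |w i| = s i := by
      intro i hi
      rw [hwdef]
      simp only [if_neg (Finset.mem_erase.mp hi).1]
      rw [sub_zero, abs_of_nonneg (hs_nonneg i)]
    have h3 : ∑ i ∈ Finset.univ.erase i0, s i = 1 - s i0 := by
      have := Finset.add_sum_erase Finset.univ s (Finset.mem_univ i0)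
      rw [hs_sum] at this
      linarith
    rw [h1, Finset.sum_congr rfl h2, h3]
    linarith
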